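/- Let G be a connected simple graph of order n with diam(G) = 2 and β(G) = n − 3, with twin graph G*, and let v be a vertex of G such that Γ_2^*(v^*) ≠ ∅ and Γ_1(v) is homogeneous. If Γ_2(v) is homogeneous and |R_1^*(v^*)| = 2, then R_2^*(v^*) = ∅. -/

import Mathlib

namespace PaperMetricDim

open SimpleGraph

variable {V : Type*}

/-- A set `W` of vertices resolves the graph `G`: any two distinct vertices have
different distance to some vertex of `W`. -/
def Resolves (G : SimpleGraph V) (W : Set V) : Prop :=
  ∀ u v : V, u ≠ v → ∃ w ∈ W, G.dist u w ≠ G.dist v w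

/-- The metric dimension of `G`: the minimum cardinality of a resolving set. -/
noncomputable def metricDim (G : SimpleGraph V) : ℕ :=
  sInf {k : ℕ | ∃ W : Set V, Resolves G W ∧ W.ncard = k}

/-- `G` is connected and has diameter exactly `d`. -/
def diamEq (G : SimpleGraph V) (d : ℕ) : Prop :=
  G.Connected ∧ (∀ u v : V, G.dist u v ≤ d) ∧ ∃ u v : V, G.dist u v = d

/-- A set of vertices is homogeneous if it induces a complete or an empty subgraph. -/
def Homogeneous (G : SimpleGraph V) (S : Set V) : Prop :=
  (∀ a ∈ S, ∀ b ∈ S, a ≠ b → G.Adj a b) ∨ (∀ a ∈ S, ∀ b ∈ S, ¬ G.Adj a b)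

/-- Two distinct vertices are twins: they have the same neighbours apart from
each other. -/
def Twins (G : SimpleGraph V) (u v : V) : Prop :=
  u ≠ v ∧ G.neighborSet u \ {v} = G.neighborSet v \ {u}

/-- The twin equivalence relation: equal or twins. -/
def twinRel (G : SimpleGraph V) (u v : V) : Prop := u = v ∨ Twins G u v

/-- The twin class of a vertex. -/
def twinClass (G : SimpleGraph V) (v : V) : Set V := {u : V | twinRel G v u}

/-- The vertices of the twin graph: twin equivalence classes. -/
def TwinVertex (G : SimpleGraph V) : Type _ := {S : Set V // ∃ v : V, S = twinClass G v}

/-- The twin graph `G*` of `G`: twin classes, two distinct classes being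
adjacent iff (some, equivalently all) representatives are adjacent in `G`. -/
def twinGraph (G : SimpleGraph V) : SimpleGraph (TwinVertex G) where
  Adj A B := A ≠ B ∧ ∃ a ∈ A.1, ∃ b ∈ B.1, G.Adj a b
  symm := ⟨by
    rintro A B ⟨hne, a, ha, b, hb, hab⟩
    exact ⟨hne.symm, b, hb, a, ha, hab.symm⟩⟩
  loopless := ⟨by rintro A ⟨hne, -⟩; exact hne rfl⟩

/-- The twin class of `v`, as a vertex of the twin graph. -/
def cls (G : SimpleGraph V) (v : V) : TwinVertex G := ⟨twinClass G v, v, rfl⟩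

/-- A twin-graph vertex of type (1): a singleton class. -/
def typeOne (G : SimpleGraph V) (A : TwinVertex G) : Prop := ∃ v : V, A.1 = {v}

/-- A twin-graph vertex of type (K): a class with at least two vertices inducing
a complete subgraph. -/
def typeK (G : SimpleGraph V) (A : TwinVertex G) : Prop :=
  A.1.Nontrivial ∧ ∀ a ∈ A.1, ∀ b ∈ A.1, a ≠ b → G.Adj a b

/-- A twin-graph vertex of type (N): a class with at least two vertices inducing
an empty subgraph. -/
def typeN (G : SimpleGraph V) (A : TwinVertex G) : Prop :=
  A.1.Nontrivial ∧ ∀ a ∈ A.1, ∀ b ∈ A.1, ¬ G.Adj a b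

/-- Type (1K): type (1) or type (K). -/
def type1K (G : SimpleGraph V) (A : TwinVertex G) : Prop := typeOne G A ∨ typeK G A

/-- Type (1N): type (1) or type (N). -/
def type1N (G : SimpleGraph V) (A : TwinVertex G) : Prop := typeOne G A ∨ typeN G A

/-- Type (KN): type (K) or type (N). -/
def typeKN (G : SimpleGraph V) (A : TwinVertex G) : Prop := typeK G A ∨ typeN G A

/-- `Γ_i(v)`: the set of vertices at distance `i` from `v`. -/
def Gamma (G : SimpleGraph V) (i : ℕ) (v : V) : Set V := {u : V | G.dist u v = i}

/-- `Γ_i^*(v^*)`: the set of twin-graph vertices at distance `i` from `v^*`. -/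
def GammaStar (G : SimpleGraph V) (i : ℕ) (v : V) : Set (TwinVertex G) :=
  {A : TwinVertex G | (twinGraph G).dist A (cls G v) = i}

/-- `R_1(v)`: neighbours of `v` having a neighbour at distance 2 from `v`. -/
def R1 (G : SimpleGraph V) (v : V) : Set V :=
  {x ∈ Gamma G 1 v | ∃ y ∈ Gamma G 2 v, G.Adj x y}

/-- `R_2(v) = Γ_1(v) \ R_1(v)`. -/
def R2 (G : SimpleGraph V) (v : V) : Set V := Gamma G 1 v \ R1 G v

/-- `R_1^*(v^*)`: twin-graph neighbours of `v^*` having a neighbour in `Γ_2^*(v^*)`. -/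
def R1Star (G : SimpleGraph V) (v : V) : Set (TwinVertex G) :=
  {A ∈ GammaStar G 1 v | ∃ B ∈ GammaStar G 2 v, (twinGraph G).Adj A B}

/-- `R_2^*(v^*) = Γ_1^*(v^*) \ R_1^*(v^*)`. -/
def R2Star (G : SimpleGraph V) (v : V) : Set (TwinVertex G) :=
  GammaStar G 1 v \ R1Star G v

/-- `M_1(x) = Γ_1(v) ∩ Γ_1(x)` (for `x ∈ Γ_1(v)`). -/
def M1 (G : SimpleGraph V) (v x : V) : Set V := Gamma G 1 v ∩ Gamma G 1 x

/-- `M_2(x) = Γ_1(v) ∩ Γ_2(x)` (for `x ∈ Γ_1(v)`). -/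
def M2 (G : SimpleGraph V) (v x : V) : Set V := Gamma G 1 v ∩ Gamma G 2 x

/-- Structure `G_1`: the twin graph is `K_3` and has at most one vertex of type (1K). -/
def structG1 (G : SimpleGraph V) : Prop :=
  ∃ a b c : TwinVertex G, a ≠ b ∧ a ≠ c ∧ b ≠ c ∧
    (∀ X : TwinVertex G, X = a ∨ X = b ∨ X = c) ∧
    (twinGraph G).Adj a b ∧ (twinGraph G).Adj a c ∧ (twinGraph G).Adj b c ∧
    (∀ X Y : TwinVertex G, type1K G X → type1K G Y → X = Y)

/-- Structure `G_2`: the twin graph is the path `P_3` with (a) centre of type (N)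
and some leaf of type (K), or (b) one leaf of type (K) and the other of type (KN). -/
def structG2 (G : SimpleGraph V) : Prop :=
  ∃ a b c : TwinVertex G, a ≠ b ∧ a ≠ c ∧ b ≠ c ∧
    (∀ X : TwinVertex G, X = a ∨ X = b ∨ X = c) ∧
    (twinGraph G).Adj a b ∧ (twinGraph G).Adj b c ∧ ¬ (twinGraph G).Adj a c ∧
    ((typeN G b ∧ (typeK G a ∨ typeK G c)) ∨
     (typeK G a ∧ typeKN G c) ∨ (typeK G c ∧ typeKN G a))

/-- Structure `G_3`: the twin graph is the paw, the triangle being `u, p, q` with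
the pendant vertex `l` attached to `u`; `p` is of type (N), `q` of type (1K),
`l` of type (1N); and if `q` is of type (K) then neither `l` nor `u` is of type (N). -/
def structG3 (G : SimpleGraph V) : Prop :=
  ∃ u p q l : TwinVertex G,
    u ≠ p ∧ u ≠ q ∧ u ≠ l ∧ p ≠ q ∧ p ≠ l ∧ q ≠ l ∧
    (∀ X : TwinVertex G, X = u ∨ X = p ∨ X = q ∨ X = l) ∧
    (twinGraph G).Adj u p ∧ (twinGraph G).Adj u q ∧ (twinGraph G).Adj p q ∧
    (twinGraph G).Adj u l ∧ ¬ (twinGraph G).Adj p l ∧ ¬ (twinGraph G).Adj q l ∧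
    typeN G p ∧ type1K G q ∧ type1N G l ∧
    (typeK G q → ¬ typeN G l ∧ ¬ typeN G u)

/-- Structure `G_4`: the twin graph is the cycle `C_5` and every vertex is of type (1). -/
def structG4 (G : SimpleGraph V) : Prop :=
  ∃ v0 v1 v2 v3 v4 : TwinVertex G,
    v0 ≠ v1 ∧ v0 ≠ v2 ∧ v0 ≠ v3 ∧ v0 ≠ v4 ∧ v1 ≠ v2 ∧ v1 ≠ v3 ∧ v1 ≠ v4 ∧
    v2 ≠ v3 ∧ v2 ≠ v4 ∧ v3 ≠ v4 ∧
    (∀ X : TwinVertex G, X = v0 ∨ X = v1 ∨ X = v2 ∨ X = v3 ∨ X = v4) ∧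
    (twinGraph G).Adj v0 v1 ∧ (twinGraph G).Adj v1 v2 ∧ (twinGraph G).Adj v2 v3 ∧
    (twinGraph G).Adj v3 v4 ∧ (twinGraph G).Adj v4 v0 ∧
    ¬ (twinGraph G).Adj v0 v2 ∧ ¬ (twinGraph G).Adj v1 v3 ∧ ¬ (twinGraph G).Adj v2 v4 ∧
    ¬ (twinGraph G).Adj v3 v0 ∧ ¬ (twinGraph G).Adj v4 v1 ∧
    (∀ X : TwinVertex G, typeOne G X)

/-- Structure `G_5`: the twin graph is `C_5` with one chord (cycle `v0 v1 v2 v3 v4`,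
chord `v0 v2`); the two adjacent degree-2 vertices `v3, v4` are of type (1), the
other vertices of type (1K). -/
def structG5 (G : SimpleGraph V) : Prop :=
  ∃ v0 v1 v2 v3 v4 : TwinVertex G,
    v0 ≠ v1 ∧ v0 ≠ v2 ∧ v0 ≠ v3 ∧ v0 ≠ v4 ∧ v1 ≠ v2 ∧ v1 ≠ v3 ∧ v1 ≠ v4 ∧
    v2 ≠ v3 ∧ v2 ≠ v4 ∧ v3 ≠ v4 ∧
    (∀ X : TwinVertex G, X = v0 ∨ X = v1 ∨ X = v2 ∨ X = v3 ∨ X = v4) ∧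
    (twinGraph G).Adj v0 v1 ∧ (twinGraph G).Adj v1 v2 ∧ (twinGraph G).Adj v2 v3 ∧
    (twinGraph G).Adj v3 v4 ∧ (twinGraph G).Adj v4 v0 ∧ (twinGraph G).Adj v0 v2 ∧
    ¬ (twinGraph G).Adj v1 v3 ∧ ¬ (twinGraph G).Adj v1 v4 ∧ ¬ (twinGraph G).Adj v2 v4 ∧
    typeOne G v3 ∧ typeOne G v4 ∧ type1K G v0 ∧ type1K G v1 ∧ type1K G v2

/-- Structure `G_6`: the twin graph is `C_5` with two adjacent chords (cycle
`v0 v1 v2 v3 v4`, chords `v0 v2` and `v0 v3`, so `v0` has degree 4); `v0` is of any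
type, the other vertices of type (1K); no two non-adjacent vertices are both of
type (K), and no two adjacent vertices have the different types (K) and (N). -/
def structG6 (G : SimpleGraph V) : Prop :=
  ∃ v0 v1 v2 v3 v4 : TwinVertex G,
    v0 ≠ v1 ∧ v0 ≠ v2 ∧ v0 ≠ v3 ∧ v0 ≠ v4 ∧ v1 ≠ v2 ∧ v1 ≠ v3 ∧ v1 ≠ v4 ∧
    v2 ≠ v3 ∧ v2 ≠ v4 ∧ v3 ≠ v4 ∧
    (∀ X : TwinVertex G, X = v0 ∨ X = v1 ∨ X = v2 ∨ X = v3 ∨ X = v4) ∧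
    (twinGraph G).Adj v0 v1 ∧ (twinGraph G).Adj v1 v2 ∧ (twinGraph G).Adj v2 v3 ∧
    (twinGraph G).Adj v3 v4 ∧ (twinGraph G).Adj v4 v0 ∧ (twinGraph G).Adj v0 v2 ∧
    (twinGraph G).Adj v0 v3 ∧
    ¬ (twinGraph G).Adj v1 v3 ∧ ¬ (twinGraph G).Adj v1 v4 ∧ ¬ (twinGraph G).Adj v2 v4 ∧
    type1K G v1 ∧ type1K G v2 ∧ type1K G v3 ∧ type1K G v4 ∧
    (∀ X Y : TwinVertex G, X ≠ Y → ¬ (twinGraph G).Adj X Y →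
      ¬ (typeK G X ∧ typeK G Y)) ∧
    (∀ X Y : TwinVertex G, (twinGraph G).Adj X Y → ¬ (typeK G X ∧ typeN G Y))

/-- Structure `G_7`: the twin graph is the kite (`K_4` minus an edge, vertices
`a, b` of degree 3 in the kite and `c, d` the non-adjacent pair) with a pendant
vertex `l` attached to the degree-3 vertex `a`; `l` is of type (1), `a` and `b`
are of type (1K), one of `c, d` is of type (K) and the other of type (1). -/
def structG7 (G : SimpleGraph V) : Prop :=
  ∃ a b c d l : TwinVertex G,
    a ≠ b ∧ a ≠ c ∧ a ≠ d ∧ a ≠ l ∧ b ≠ c ∧ b ≠ d ∧ b ≠ l ∧ c ≠ d ∧ c ≠ l ∧ d ≠ l ∧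
    (∀ X : TwinVertex G, X = a ∨ X = b ∨ X = c ∨ X = d ∨ X = l) ∧
    (twinGraph G).Adj a b ∧ (twinGraph G).Adj a c ∧ (twinGraph G).Adj a d ∧
    (twinGraph G).Adj b c ∧ (twinGraph G).Adj b d ∧ (twinGraph G).Adj a l ∧
    ¬ (twinGraph G).Adj c d ∧ ¬ (twinGraph G).Adj b l ∧ ¬ (twinGraph G).Adj c l ∧
    ¬ (twinGraph G).Adj d l ∧
    typeOne G l ∧ type1K G a ∧ type1K G b ∧ typeK G c ∧ typeOne G d

/-- Structure `G_8`: the twin graph is the kite (`K_4` minus an edge, `a, b` of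
degree 3 and `c, d` the non-adjacent degree-2 pair); one degree-2 vertex `c` is of
type (K) and the other `d` of type (1); one degree-3 vertex `a` is of type (N)
and the other `b` of type (1K). -/
def structG8 (G : SimpleGraph V) : Prop :=
  ∃ a b c d : TwinVertex G,
    a ≠ b ∧ a ≠ c ∧ a ≠ d ∧ b ≠ c ∧ b ≠ d ∧ c ≠ d ∧
    (∀ X : TwinVertex G, X = a ∨ X = b ∨ X = c ∨ X = d) ∧
    (twinGraph G).Adj a b ∧ (twinGraph G).Adj a c ∧ (twinGraph G).Adj a d ∧
    (twinGraph G).Adj b c ∧ (twinGraph G).Adj b d ∧ ¬ (twinGraph G).Adj c d ∧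
    typeN G a ∧ type1K G b ∧ typeK G c ∧ typeOne G d

/-- Structure `G_9`: the twin graph is `C_4`, two adjacent vertices of type (K)
and the other two of type (1). -/
def structG9 (G : SimpleGraph V) : Prop :=
  ∃ v0 v1 v2 v3 : TwinVertex G,
    v0 ≠ v1 ∧ v0 ≠ v2 ∧ v0 ≠ v3 ∧ v1 ≠ v2 ∧ v1 ≠ v3 ∧ v2 ≠ v3 ∧
    (∀ X : TwinVertex G, X = v0 ∨ X = v1 ∨ X = v2 ∨ X = v3) ∧
    (twinGraph G).Adj v0 v1 ∧ (twinGraph G).Adj v1 v2 ∧ (twinGraph G).Adj v2 v3 ∧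
    (twinGraph G).Adj v3 v0 ∧ ¬ (twinGraph G).Adj v0 v2 ∧ ¬ (twinGraph G).Adj v1 v3 ∧
    typeK G v0 ∧ typeK G v1 ∧ typeOne G v2 ∧ typeOne G v3

/-- Structure `G_10`: the twin graph is the wheel `C_4 ∨ K_1` (hub `h`, rim
`v0 v1 v2 v3`); two adjacent rim (degree-3) vertices `v0, v1` are of type (K), the
hub is of type (1K), and the other vertices of type (1). -/
def structG10 (G : SimpleGraph V) : Prop :=
  ∃ h v0 v1 v2 v3 : TwinVertex G,
    h ≠ v0 ∧ h ≠ v1 ∧ h ≠ v2 ∧ h ≠ v3 ∧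
    v0 ≠ v1 ∧ v0 ≠ v2 ∧ v0 ≠ v3 ∧ v1 ≠ v2 ∧ v1 ≠ v3 ∧ v2 ≠ v3 ∧
    (∀ X : TwinVertex G, X = h ∨ X = v0 ∨ X = v1 ∨ X = v2 ∨ X = v3) ∧
    (twinGraph G).Adj h v0 ∧ (twinGraph G).Adj h v1 ∧ (twinGraph G).Adj h v2 ∧
    (twinGraph G).Adj h v3 ∧
    (twinGraph G).Adj v0 v1 ∧ (twinGraph G).Adj v1 v2 ∧ (twinGraph G).Adj v2 v3 ∧
    (twinGraph G).Adj v3 v0 ∧ ¬ (twinGraph G).Adj v0 v2 ∧ ¬ (twinGraph G).Adj v1 v3 ∧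
    typeK G v0 ∧ typeK G v1 ∧ type1K G h ∧ typeOne G v2 ∧ typeOne G v3


section Aux

variable {G : SimpleGraph V}

lemma twins_symm {u w : V} (h : Twins G u w) : Twins G w u := ⟨h.1.symm, h.2.symm⟩

lemma twins_adj_iff {u w : V} (h : Twins G u w) {s : V} (hsu : s ≠ u) (hsw : s ≠ w) :
    G.Adj u s ↔ G.Adj w s := by
  constructor
  · intro ha
    have hm : s ∈ G.neighborSet u \ {w} := ⟨ha, hsw⟩
    rw [h.2] at hm
    exact hm.1
  · intro ha
    have hm : s ∈ G.neighborSet w \ {u} := ⟨ha, hsu⟩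
    rw [← h.2] at hm
    exact hm.1

lemma twins_helper {u v w : V} (h1 : Twins G u v) (h2 : Twins G v w) (huw : u ≠ w)
    (hadj : G.Adj u v) : G.Adj w v := by
  have s1 : u ∈ G.neighborSet v \ {w} := ⟨hadj.symm, huw⟩
  rw [h2.2] at s1
  have s2 : w ∈ G.neighborSet u \ {v} := ⟨s1.1.symm, h2.1.symm⟩
  rw [h1.2] at s2
  exact s2.1.symm

lemma twins_trans {u v w : V} (h1 : Twins G u v) (h2 : Twins G v w) (huw : u ≠ w) :
    Twins G u w := by
  refine ⟨huw, Set.ext fun s => ?_⟩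
  simp only [Set.mem_diff, SimpleGraph.mem_neighborSet, Set.mem_singleton_iff]
  by_cases hsv : s = v
  · subst hsv
    constructor
    · rintro ⟨ha, -⟩
      exact ⟨twins_helper h1 h2 huw ha, h1.1.symm⟩
    · rintro ⟨ha, -⟩
      exact ⟨twins_helper (twins_symm h2) (twins_symm h1) huw.symm ha, h2.1⟩
  · by_cases hsu : s = u
    · subst hsu
      constructor
      · rintro ⟨ha, -⟩
        exact absurd rfl ha.ne
      · rintro ⟨-, ha⟩
        exact absurd rfl ha
    · by_cases hsw : s = w
      · subst hsw
        constructor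
        · rintro ⟨-, ha⟩
          exact absurd rfl ha
        · rintro ⟨ha, -⟩
          exact absurd rfl ha.ne
      · have e1 := twins_adj_iff h1 hsu hsv
        have e2 := twins_adj_iff h2 hsv hsw
        constructor
        · rintro ⟨ha, -⟩
          exact ⟨e2.mp (e1.mp ha), hsu⟩
        · rintro ⟨ha, -⟩
          exact ⟨e1.mpr (e2.mpr ha), hsw⟩

lemma twinRel_symm' {u w : V} (h : twinRel G u w) : twinRel G w u := by
  rcases h with rfl | h
  · exact Or.inl rfl
  · exact Or.inr (twins_symm h)

lemma twinRel_trans' {u v w : V} (h1 : twinRel G u v) (h2 : twinRel G v w) : twinRel G u w := by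
  rcases h1 with rfl | h1
  · exact h2
  · rcases h2 with rfl | h2
    · exact Or.inr h1
    · by_cases huw : u = w
      · exact Or.inl huw
      · exact Or.inr (twins_trans h1 h2 huw)

lemma mem_twinClass_self (G : SimpleGraph V) (u : V) : u ∈ twinClass G u := Or.inl rfl

lemma twinClass_eq_of_mem {u w : V} (h : u ∈ twinClass G w) : twinClass G u = twinClass G w := by
  ext z
  simp only [twinClass, Set.mem_setOf_eq]
  exact ⟨fun hz => twinRel_trans' h hz, fun hz => twinRel_trans' (twinRel_symm' h) hz⟩

lemma tv_nonempty (A : TwinVertex G) : A.1.Nonempty := by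
  obtain ⟨w, hw⟩ := A.2
  exact ⟨w, hw ▸ mem_twinClass_self G w⟩

lemma tv_eq_of_mem {A B : TwinVertex G} {u : V} (hA : u ∈ A.1) (hB : u ∈ B.1) : A = B := by
  obtain ⟨a, ha⟩ := A.2
  obtain ⟨b, hb⟩ := B.2
  apply Subtype.ext
  rw [ha] at hA ⊢
  rw [hb] at hB ⊢
  rw [← twinClass_eq_of_mem hA, ← twinClass_eq_of_mem hB]

lemma tv_ne_of_mem {A B : TwinVertex G} {a b : V} (hAB : A ≠ B) (ha : a ∈ A.1) (hb : b ∈ B.1) :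
    a ≠ b := fun h => hAB (tv_eq_of_mem ha (h ▸ hb))

lemma twinRel_of_mems {A : TwinVertex G} {a b : V} (ha : a ∈ A.1) (hb : b ∈ A.1) :
    twinRel G a b := by
  obtain ⟨w, hw⟩ := A.2
  rw [hw] at ha hb
  exact twinRel_trans' (twinRel_symm' ha) hb

lemma adj_of_tvAdj {A B : TwinVertex G} (h : (twinGraph G).Adj A B) {a b : V}
    (ha : a ∈ A.1) (hb : b ∈ B.1) : G.Adj a b := by
  obtain ⟨hne, a₀, ha₀, b₀, hb₀, hadj⟩ := h
  have h1 : G.Adj a b₀ := by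
    rcases twinRel_of_mems ha₀ ha with rfl | ht
    · exact hadj
    · exact (twins_adj_iff ht (tv_ne_of_mem hne.symm hb₀ ha₀) (tv_ne_of_mem hne.symm hb₀ ha)).mp hadj
  rcases twinRel_of_mems hb₀ hb with rfl | ht
  · exact h1
  · exact ((twins_adj_iff ht (tv_ne_of_mem hne ha hb₀) (tv_ne_of_mem hne ha hb)).mp h1.symm).symm

lemma mem_cls (G : SimpleGraph V) (u : V) : u ∈ (cls G u).1 := mem_twinClass_self G u

lemma cls_eq_iff {a b : V} : cls G a = cls G b ↔ a ∈ twinClass G b := by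
  constructor
  · intro h
    have := mem_cls G a
    rw [h] at this
    exact this
  · intro h
    exact tv_eq_of_mem (mem_cls G a) h

lemma dist_two_of (hc : G.Connected) {u w : V} (h1 : u ≠ w) (h2 : ¬ G.Adj u w)
    (hle : G.dist u w ≤ 2) : G.dist u w = 2 := by
  have h0 : G.dist u w ≠ 0 := fun h => h1 (hc.dist_eq_zero_iff.mp h)
  have h1' : G.dist u w ≠ 1 := fun h => h2 (SimpleGraph.dist_eq_one_iff_adj.mp h)
  omega

lemma exists_middle {u w : V} (h : G.dist u w = 2) : ∃ m, G.Adj u m ∧ G.Adj m w := by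
  obtain ⟨p, hp⟩ := SimpleGraph.exists_walk_of_dist_ne_zero (by omega : G.dist u w ≠ 0)
  rw [h] at hp
  cases p with
  | nil => simp at hp
  | cons h1 q =>
    cases q with
    | nil => simp at hp
    | cons h2 q' =>
      have hq : q'.length = 0 := by
        simp only [SimpleGraph.Walk.length_cons] at hp
        omega
      have he := SimpleGraph.Walk.eq_of_length_eq_zero hq
      subst he
      exact ⟨_, h1, h2⟩

lemma gammaStar_one_adj {X : TwinVertex G} {v : V} (hX : X ∈ GammaStar G 1 v) :
    (twinGraph G).Adj X (cls G v) := SimpleGraph.dist_eq_one_iff_adj.mp hX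

lemma adj_v_of_gammaStar_one {X : TwinVertex G} {v : V} (hX : X ∈ GammaStar G 1 v)
    {x : V} (hx : x ∈ X.1) : G.Adj x v :=
  adj_of_tvAdj (gammaStar_one_adj hX) hx (mem_cls G v)

lemma gammaStar_two_props {E : TwinVertex G} {v : V} (hE : E ∈ GammaStar G 2 v) :
    E ≠ cls G v ∧ ¬ (twinGraph G).Adj E (cls G v) := by
  have h2 : (twinGraph G).dist E (cls G v) = 2 := hE
  constructor
  · rintro rfl
    rw [SimpleGraph.dist_self] at h2
    omega
  · intro h
    have h1 := SimpleGraph.dist_eq_one_iff_adj.mpr h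
    omega

lemma gammaStar_two_elem {E : TwinVertex G} {v : V} (hE : E ∈ GammaStar G 2 v)
    {e : V} (he : e ∈ E.1) : ¬ G.Adj e v ∧ e ≠ v := by
  obtain ⟨hne, hnadj⟩ := gammaStar_two_props hE
  exact ⟨fun h => hnadj ⟨hne, e, he, v, mem_cls G v, h⟩,
         tv_ne_of_mem hne he (mem_cls G v)⟩

lemma not_adj_of_R2Star {v : V} {X : TwinVertex G} (hX : X ∈ R2Star G v) {x : V} (hx : x ∈ X.1)
    {E : TwinVertex G} (hE : E ∈ GammaStar G 2 v) {e : V} (he : e ∈ E.1) : ¬ G.Adj x e := by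
  intro h
  have hXE : X ≠ E := by
    rintro rfl
    have h1 : (twinGraph G).dist X (cls G v) = 1 := hX.1
    have h2 : (twinGraph G).dist X (cls G v) = 2 := hE
    omega
  exact hX.2 ⟨hX.1, E, hE, ⟨hXE, x, hx, e, he, h⟩⟩

lemma cls_mem_gammaStar_two (hc : G.Connected) (hle : ∀ u w : V, G.dist u w ≤ 2)
    {s v : V} (hsv : s ≠ v) (hnadj : ¬ G.Adj s v) (hncls : s ∉ twinClass G v) :
    cls G s ∈ GammaStar G 2 v := by
  obtain ⟨m, h1, h2⟩ := exists_middle (dist_two_of hc hsv hnadj (hle s v))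
  have hsm : cls G s ≠ cls G m := by
    intro h
    rcases cls_eq_iff.mp h with rfl | ht
    · exact hnadj h2
    · exact hnadj ((twins_adj_iff ht h2.ne' (Ne.symm hsv)).mp h2)
  have hmv : cls G m ≠ cls G v := by
    intro h
    rcases cls_eq_iff.mp h with rfl | ht
    · exact hnadj h1
    · exact hnadj ((twins_adj_iff ht hsv h1.ne).mpr h1.symm).symm
  have hsvc : cls G s ≠ cls G v := fun h => hncls (cls_eq_iff.mp h)
  have a1 : (twinGraph G).Adj (cls G s) (cls G m) := ⟨hsm, s, mem_cls G s, m, mem_cls G m, h1⟩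
  have a2 : (twinGraph G).Adj (cls G m) (cls G v) := ⟨hmv, m, mem_cls G m, v, mem_cls G v, h2⟩
  have hwalk : (twinGraph G).dist (cls G s) (cls G v) ≤ 2 := by
    have := SimpleGraph.dist_le
      (SimpleGraph.Walk.cons a1 (SimpleGraph.Walk.cons a2 SimpleGraph.Walk.nil))
    simpa using this
  have hreach : (twinGraph G).Reachable (cls G s) (cls G v) :=
    (SimpleGraph.Walk.cons a1 (SimpleGraph.Walk.cons a2 SimpleGraph.Walk.nil)).reachable
  have h0 : (twinGraph G).dist (cls G s) (cls G v) ≠ 0 :=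
    fun h => hsvc (hreach.dist_eq_zero_iff.mp h)
  have hn1 : (twinGraph G).dist (cls G s) (cls G v) ≠ 1 := by
    intro h
    exact hnadj (adj_of_tvAdj (SimpleGraph.dist_eq_one_iff_adj.mp h) (mem_cls G s) (mem_cls G v))
  show (twinGraph G).dist (cls G s) (cls G v) = 2
  omega

lemma adj_of_twin {v t c : V} (htw : Twins G v t) (hcv : G.Adj c v) (hct : c ≠ t) :
    G.Adj t c := by
  have hm : c ∈ G.neighborSet v \ {t} := ⟨hcv.symm, hct⟩
  rw [htw.2] at hm
  exact hm.1

lemma exists_distinguisher {a b : V} (h : ¬ Twins G a b) (hab : a ≠ b) :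
    ∃ s, s ≠ a ∧ s ≠ b ∧ ((G.Adj a s ∧ ¬ G.Adj b s) ∨ (¬ G.Adj a s ∧ G.Adj b s)) := by
  obtain ⟨s, hs⟩ : ∃ s, ¬ ((s ∈ G.neighborSet a \ {b}) ↔ (s ∈ G.neighborSet b \ {a})) := by
    by_contra hcon
    push_neg at hcon
    exact h ⟨hab, Set.ext hcon⟩
  by_cases h1 : s ∈ G.neighborSet a \ {b}
  · have h2 : s ∉ G.neighborSet b \ {a} := fun hr => hs ⟨fun _ => hr, fun _ => h1⟩
    have has : G.Adj a s := h1.1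
    have hsb : s ≠ b := h1.2
    have hnbs : ¬ G.Adj b s := fun hbs => h2 ⟨hbs, has.ne'⟩
    exact ⟨s, has.ne', hsb, Or.inl ⟨has, hnbs⟩⟩
  · have h2 : s ∈ G.neighborSet b \ {a} := by
      by_contra h2
      exact hs ⟨fun hl => (h1 hl).elim, fun hr => (h2 hr).elim⟩
    have hbs : G.Adj b s := h2.1
    have hsa : s ≠ a := h2.2
    have hnas : ¬ G.Adj a s := fun has => h1 ⟨has, hbs.ne'⟩
    exact ⟨s, hsa, hbs.ne', Or.inr ⟨hnas, hbs⟩⟩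

end Aux

/-- If `G` is connected of order `n`, `diam(G) = 2`, `β(G) = n - 3`, `v` is a
vertex with `Γ_2^*(v^*) ≠ ∅` and `Γ_1(v)` homogeneous, `Γ_2(v)` is homogeneous,
and `|R_1^*(v^*)| = 2`, then `R_2^*(v^*) = ∅`. -/

theorem R2Star_empty_of_homogeneous_R1Star_two
    {V : Type*} [Fintype V] (G : SimpleGraph V)
    (hdiam : diamEq G 2)
    (hbeta : metricDim G = Fintype.card V - 3)
    (v : V) (h2 : (GammaStar G 2 v).Nonempty)
    (hhom : Homogeneous G (Gamma G 1 v))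
    (hhom2 : Homogeneous G (Gamma G 2 v))
    (hR1 : (R1Star G v).ncard = 2) :
    R2Star G v = ∅ := by
  obtain ⟨hc, hle, -⟩ := hdiam
  rw [Set.eq_empty_iff_forall_notMem]
  intro X hX
  obtain ⟨x, hx⟩ := tv_nonempty X
  have hX1 : X ∈ GammaStar G 1 v := hX.1
  have hxv : G.Adj x v := adj_v_of_gammaStar_one hX1 hx
  by_cases hT : ∃ t, Twins G v t ∧ ¬ G.Adj v t
  · -- `v` has a non-adjacent twin `t`
    obtain ⟨t, htw, htnadj⟩ := hT
    obtain ⟨A, B, hAB, hset⟩ := Set.ncard_eq_two.mp hR1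
    have hA : A ∈ R1Star G v := by rw [hset]; exact Set.mem_insert _ _
    have hB : B ∈ R1Star G v := by rw [hset]; exact Set.mem_insert_of_mem _ rfl
    obtain ⟨a, ha⟩ := tv_nonempty A
    obtain ⟨b, hb⟩ := tv_nonempty B
    obtain ⟨hA1, Ea, hEa, hAEa⟩ := hA
    obtain ⟨hB1, Eb, hEb, hBEb⟩ := hB
    obtain ⟨ea, hea⟩ := tv_nonempty Ea
    obtain ⟨eb, heb⟩ := tv_nonempty Eb
    have hav : G.Adj a v := adj_v_of_gammaStar_one hA1 ha
    have hbv : G.Adj b v := adj_v_of_gammaStar_one hB1 hb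
    have haea : G.Adj a ea := adj_of_tvAdj hAEa ha hea
    have hbeb : G.Adj b eb := adj_of_tvAdj hBEb hb heb
    obtain ⟨heanv, heane⟩ := gammaStar_two_elem hEa hea
    obtain ⟨hebnv, hebne⟩ := gammaStar_two_elem hEb heb
    have hXA : X ≠ A := by rintro rfl; exact hX.2 ⟨hX.1, Ea, hEa, hAEa⟩
    have hXB : X ≠ B := by rintro rfl; exact hX.2 ⟨hX.1, Eb, hEb, hBEb⟩
    have hxa : x ≠ a := tv_ne_of_mem hXA hx ha
    have hxb : x ≠ b := tv_ne_of_mem hXB hx hb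
    have hab : a ≠ b := tv_ne_of_mem hAB ha hb
    have hxea : ¬ G.Adj x ea := not_adj_of_R2Star hX hx hEa hea
    have hxeb : ¬ G.Adj x eb := not_adj_of_R2Star hX hx hEb heb
    have htv : t ≠ v := htw.1.symm
    have htx : G.Adj t x := adj_of_twin htw hxv (fun h => htnadj (by rw [← h]; exact hxv.symm))
    have hta : G.Adj t a := adj_of_twin htw hav (fun h => htnadj (by rw [← h]; exact hav.symm))
    have htb : G.Adj t b := adj_of_twin htw hbv (fun h => htnadj (by rw [← h]; exact hbv.symm))
    have hnotw : ¬ Twins G a b := by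
      intro h
      obtain ⟨w, hw⟩ := B.2
      have haB : a ∈ B.1 := by
        rw [hw] at hb ⊢
        exact twinRel_trans' hb (Or.inr (twins_symm h))
      exact hAB (tv_eq_of_mem ha haB)
    obtain ⟨s, hsa, hsb, hsor⟩ := exists_distinguisher hnotw hab
    have hsv : s ≠ v := by
      rintro rfl
      rcases hsor with ⟨h1, h2⟩ | ⟨h1, h2⟩
      · exact h2 hbv
      · exact h1 hav
    have hxg : x ∈ Gamma G 1 v := SimpleGraph.dist_eq_one_iff_adj.mpr hxv
    have hag : a ∈ Gamma G 1 v := SimpleGraph.dist_eq_one_iff_adj.mpr hav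
    have hbg : b ∈ Gamma G 1 v := SimpleGraph.dist_eq_one_iff_adj.mpr hbv
    have hsx : s ≠ x := by
      rintro rfl
      rcases hhom with hcl | hind
      · rcases hsor with ⟨h1, h2⟩ | ⟨h1, h2⟩
        · exact h2 (hcl b hbg _ hxg (Ne.symm hxb))
        · exact h1 (hcl a hag _ hxg (Ne.symm hxa))
      · rcases hsor with ⟨h1, h2⟩ | ⟨h1, h2⟩
        · exact hind a hag _ hxg h1
        · exact hind b hbg _ hxg h2
    have hvx : v ≠ x := hxv.ne'
    have hva : v ≠ a := hav.ne'
    have hvb : v ≠ b := hbv.ne'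
    have hxnea : x ≠ ea := fun h => heanv (h ▸ hxv)
    have hxneb : x ≠ eb := fun h => hebnv (h ▸ hxv)
    set W : Set V := Set.univ \ {v, x, a, b} with hWdef
    have hmemW : ∀ z : V, z ≠ v → z ≠ x → z ≠ a → z ≠ b → z ∈ W := by
      intro z h1 h2 h3 h4
      refine ⟨trivial, ?_⟩
      simp only [Set.mem_insert_iff, Set.mem_singleton_iff]
      push_neg
      exact ⟨h1, h2, h3, h4⟩
    have htW : t ∈ W := hmemW t htv
      (fun h => htnadj (by rw [h]; exact hxv.symm))
      (fun h => htnadj (by rw [h]; exact hav.symm))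
      (fun h => htnadj (by rw [h]; exact hbv.symm))
    have heaW : ea ∈ W := hmemW ea heane
      (fun h => heanv (by rw [h]; exact hxv))
      (fun h => heanv (by rw [h]; exact hav))
      (fun h => heanv (by rw [h]; exact hbv))
    have hebW : eb ∈ W := hmemW eb hebne
      (fun h => hebnv (by rw [h]; exact hxv))
      (fun h => hebnv (by rw [h]; exact hav))
      (fun h => hebnv (by rw [h]; exact hbv))
    have hsW : s ∈ W := hmemW s hsv hsx hsa hsb
    have d1 : ∀ {p q : V}, G.Adj p q → G.dist p q = 1 :=
      fun h => SimpleGraph.dist_eq_one_iff_adj.mpr h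
    have d2 : ∀ {p q : V}, p ≠ q → ¬ G.Adj p q → G.dist p q = 2 :=
      fun h h' => dist_two_of hc h h' (hle _ _)
    have Pvx : ∃ w ∈ W, G.dist v w ≠ G.dist x w :=
      ⟨t, htW, by rw [d2 htw.1 htnadj, d1 htx.symm]; omega⟩
    have Pva : ∃ w ∈ W, G.dist v w ≠ G.dist a w :=
      ⟨t, htW, by rw [d2 htw.1 htnadj, d1 hta.symm]; omega⟩
    have Pvb : ∃ w ∈ W, G.dist v w ≠ G.dist b w :=
      ⟨t, htW, by rw [d2 htw.1 htnadj, d1 htb.symm]; omega⟩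
    have Pxa : ∃ w ∈ W, G.dist x w ≠ G.dist a w :=
      ⟨ea, heaW, by rw [d2 hxnea hxea, d1 haea]; omega⟩
    have Pxb : ∃ w ∈ W, G.dist x w ≠ G.dist b w :=
      ⟨eb, hebW, by rw [d2 hxneb hxeb, d1 hbeb]; omega⟩
    have Pab : ∃ w ∈ W, G.dist a w ≠ G.dist b w := by
      rcases hsor with ⟨h1, h2⟩ | ⟨h1, h2⟩
      · exact ⟨s, hsW, by rw [d1 h1, d2 (Ne.symm hsb) h2]; omega⟩
      · exact ⟨s, hsW, by rw [d2 (Ne.symm hsa) h1, d1 h2]; omega⟩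
    have hres : Resolves G W := by
      intro u₁ u₂ hne
      by_cases h1 : u₁ ∈ ({v, x, a, b} : Set V)
      · by_cases h2 : u₂ ∈ ({v, x, a, b} : Set V)
        · have sym : ∀ (P Q : V), (∃ w ∈ W, G.dist P w ≠ G.dist Q w) →
              ∃ w ∈ W, G.dist Q w ≠ G.dist P w := by
            rintro P Q ⟨w, hw, hd⟩
            exact ⟨w, hw, hd.symm⟩
          simp only [Set.mem_insert_iff, Set.mem_singleton_iff] at h1 h2
          rcases h1 with rfl | rfl | rfl | rfl <;> rcases h2 with rfl | rfl | rfl | rfl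
          · exact absurd rfl hne
          · exact Pvx
          · exact Pva
          · exact Pvb
          · exact sym _ _ Pvx
          · exact absurd rfl hne
          · exact Pxa
          · exact Pxb
          · exact sym _ _ Pva
          · exact sym _ _ Pxa
          · exact absurd rfl hne
          · exact Pab
          · exact sym _ _ Pvb
          · exact sym _ _ Pxb
          · exact sym _ _ Pab
          · exact absurd rfl hne
        · refine ⟨u₂, ⟨trivial, h2⟩, ?_⟩
          have hz : G.dist u₁ u₂ ≠ 0 := fun h => hne (hc.dist_eq_zero_iff.mp h)
          rw [SimpleGraph.dist_self]
          exact hz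
      · refine ⟨u₁, ⟨trivial, h1⟩, ?_⟩
        have hz : G.dist u₂ u₁ ≠ 0 := fun h => hne (hc.dist_eq_zero_iff.mp h).symm
        rw [SimpleGraph.dist_self]
        exact fun h => hz h.symm
    have hScard : ({v, x, a, b} : Set V).ncard = 4 := by
      rw [Set.ncard_insert_of_notMem (by
            simp only [Set.mem_insert_iff, Set.mem_singleton_iff]
            push_neg
            exact ⟨hvx, hva, hvb⟩),
          Set.ncard_insert_of_notMem (by
            simp only [Set.mem_insert_iff, Set.mem_singleton_iff]
            push_neg
            exact ⟨hxa, hxb⟩),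
          Set.ncard_insert_of_notMem (by
            simp only [Set.mem_singleton_iff]
            exact hab),
          Set.ncard_singleton]
    have hWcard : W.ncard = Fintype.card V - 4 := by
      rw [hWdef, Set.ncard_diff (Set.subset_univ _), hScard, Set.ncard_univ,
        Nat.card_eq_fintype_card]
    have hle4 : metricDim G ≤ Fintype.card V - 4 :=
      Nat.sInf_le ⟨W, hres, hWcard⟩
    have hbig : 4 ≤ Fintype.card V := by
      have h := Set.ncard_le_ncard (Set.subset_univ ({v, x, a, b} : Set V)) Set.finite_univ
      rw [hScard, Set.ncard_univ, Nat.card_eq_fintype_card] at h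
      exact h
    rw [hbeta] at hle4
    omega
  · -- every twin of `v` is adjacent to `v`
    push_neg at hT
    have key : ∀ s : V, s ≠ v → ¬ G.Adj s v → ¬ G.Adj x s := by
      intro s hsv hnadj hxs
      by_cases hm : s ∈ twinClass G v
      · rcases hm with heq | ht
        · exact hsv heq.symm
        · exact hnadj (hT s ht).symm
      · exact not_adj_of_R2Star hX hx (cls_mem_gammaStar_two hc hle hsv hnadj hm)
          (mem_cls G s) hxs
    rcases hhom with hcl | hind
    · -- `Γ₁(v)` is a clique: `x` would be a twin of `v`
      have hxg : x ∈ Gamma G 1 v := SimpleGraph.dist_eq_one_iff_adj.mpr hxv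
      have htwvx : Twins G v x := by
        refine ⟨hxv.ne', Set.ext fun s => ?_⟩
        simp only [Set.mem_diff, SimpleGraph.mem_neighborSet, Set.mem_singleton_iff]
        constructor
        · rintro ⟨hvs, hsx⟩
          exact ⟨hcl x hxg s (SimpleGraph.dist_eq_one_iff_adj.mpr hvs.symm) (Ne.symm hsx),
            hvs.ne'⟩
        · rintro ⟨hxs, hsv⟩
          refine ⟨?_, hxs.ne'⟩
          by_contra hns
          exact key s hsv (fun h => hns h.symm) hxs
      have hxcls : x ∈ (cls G v).1 := Or.inr htwvx
      have hXv : X = cls G v := tv_eq_of_mem hx hxcls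
      have h1 : (twinGraph G).dist X (cls G v) = 1 := hX1
      rw [hXv, SimpleGraph.dist_self] at h1
      omega
    · -- `Γ₁(v)` is independent
      obtain ⟨E, hE⟩ := h2
      obtain ⟨e, he⟩ := tv_nonempty E
      obtain ⟨henadj, henv⟩ := gammaStar_two_elem hE he
      have hxe : x ≠ e := fun h => henadj (h ▸ hxv)
      have hnxe : ¬ G.Adj x e := not_adj_of_R2Star hX hx hE he
      obtain ⟨m, hm1, hm2⟩ := exists_middle (dist_two_of hc hxe hnxe (hle x e))
      by_cases hmv : G.Adj m v
      · exact hind x (SimpleGraph.dist_eq_one_iff_adj.mpr hxv) m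
          (SimpleGraph.dist_eq_one_iff_adj.mpr hmv) hm1
      · by_cases hmeq : m = v
        · exact henadj ((hmeq ▸ hm2).symm)
        · exact key m hmeq hmv hm1

end PaperMetricDim
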